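/- (Theorem 1, forward direction.) Let n > 0, E ∈ ℝ, k ∈ ℝ, K > 0, and let P, u : ℝ → ℝ with u twice differentiable, u > 0, satisfying u''(x) + (E − P(x)) u(x) = −(n k/2) u(x)^((4−n)/n) for all x. Let σ be differentiable on an open interval I with σ'(t) = u(σ(t)), and let ψ be differentiable with ψ'(x)² = (4/(n K²)) P(x) for all x. Set a(t) = u(σ(t))^(−2/n), φ(t) = ψ(σ(t)), v(t) = (12/(K² n²)) u'(σ(t))² − (2/(K² n)) u(σ(t))² P(σ(t)) + (12 E/(K² n²)) u(σ(t))² + (3k/K²) u(σ(t))^(4/n), D = −12E/(n² K²), H(t) = a'(t)/a(t), ρ_T(t) = φ'(t)²/2 + v(t) + D/a(t)^n, p_T(t) = φ'(t)²/2 − v(t) + (n−3)D/(3 a(t)^n). Then for all t ∈ I both Einstein equations hold: H(t)² + k/a(t)² = (K²/3) ρ_T(t) and a''(t)/a(t) = −(K²/6)(ρ_T(t) + 3 p_T(t)). -/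

import Mathlib

/-- Theorem 1, forward direction: from a positive solution u of the
non-linear Schrödinger-type equation one constructs (a, φ, V) solving both
Einstein equations. -/
theorem schrodinger_to_einstein
    (n E k K : ℝ) (hn : 0 < n) (hK : 0 < K) (P u : ℝ → ℝ)
    (hu : Differentiable ℝ u) (hu' : Differentiable ℝ (deriv u))
    (hupos : ∀ x, 0 < u x)
    (hSchr : ∀ x, deriv (deriv u) x + (E - P x) * u x
      = -(n * k / 2) * u x ^ ((4 - n) / n))
    (t₁ t₂ : ℝ) (σ : ℝ → ℝ)
    (hσ : ∀ t ∈ Set.Ioo t₁ t₂, DifferentiableAt ℝ σ t)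
    (hσ' : ∀ t ∈ Set.Ioo t₁ t₂, deriv σ t = u (σ t))
    (ψ : ℝ → ℝ) (hψ : Differentiable ℝ ψ)
    (hψ' : ∀ x, (deriv ψ x) ^ 2 = 4 / (n * K ^ 2) * P x)
    (a φ v H ρT pT : ℝ → ℝ) (D : ℝ)
    (ha : a = fun t => u (σ t) ^ (-2 / n))
    (hφ : φ = fun t => ψ (σ t))
    (hv : v = fun t => 12 / (K ^ 2 * n ^ 2) * (deriv u (σ t)) ^ 2
      - 2 / (K ^ 2 * n) * u (σ t) ^ 2 * P (σ t)
      + 12 * E / (K ^ 2 * n ^ 2) * u (σ t) ^ 2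
      + 3 * k / K ^ 2 * u (σ t) ^ (4 / n))
    (hD : D = -12 * E / (n ^ 2 * K ^ 2))
    (hH : H = fun t => deriv a t / a t)
    (hρ : ρT = fun t => (deriv φ t) ^ 2 / 2 + v t + D / a t ^ n)
    (hp : pT = fun t => (deriv φ t) ^ 2 / 2 - v t + (n - 3) * D / (3 * a t ^ n)) :
    ∀ t ∈ Set.Ioo t₁ t₂,
      H t ^ 2 + k / a t ^ 2 = K ^ 2 / 3 * ρT t ∧
      deriv (deriv a) t / a t = -(K ^ 2 / 6) * (ρT t + 3 * pT t) := by
  intro t ht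
  have hn' : n ≠ 0 := ne_of_gt hn
  have hK' : K ≠ 0 := ne_of_gt hK
  -- derivative of a on the interval
  have key : ∀ s ∈ Set.Ioo t₁ t₂, HasDerivAt a (-2 / n * deriv u (σ s) * a s) s := by
    intro s hs
    have hws : 0 < u (σ s) := hupos _
    have hσd : HasDerivAt σ (u (σ s)) s := by
      have h := (hσ s hs).hasDerivAt
      rwa [hσ' s hs] at h
    have hwd : HasDerivAt (fun x => u (σ x)) (deriv u (σ s) * u (σ s)) s :=
      (hu (σ s)).hasDerivAt.comp s hσd
    have hrp := (Real.hasDerivAt_rpow_const (x := u (σ s)) (p := -2 / n)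
      (Or.inl hws.ne')).comp s hwd
    rw [ha]
    refine hrp.congr_deriv ?_
    have hsub : u (σ s) ^ (-2 / n - 1) = u (σ s) ^ (-2 / n) / u (σ s) := by
      rw [Real.rpow_sub hws, Real.rpow_one]
    simp only [Function.comp, hsub]
    field_simp
  have hws : 0 < u (σ t) := hupos _
  have hσd : HasDerivAt σ (u (σ t)) t := by
    have h := (hσ t ht).hasDerivAt
    rwa [hσ' t ht] at h
  have hφd : HasDerivAt φ (deriv ψ (σ t) * u (σ t)) t := by
    rw [hφ]; exact (hψ (σ t)).hasDerivAt.comp t hσd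
  have haD : HasDerivAt a (-2 / n * deriv u (σ t) * a t) t := key t ht
  -- second derivative of a
  have hev : deriv a =ᶠ[nhds t] fun s => -2 / n * deriv u (σ s) * a s := by
    filter_upwards [Ioo_mem_nhds ht.1 ht.2] with s hs using (key s hs).deriv
  have hu'd : HasDerivAt (fun s => deriv u (σ s)) (deriv (deriv u) (σ t) * u (σ t)) t :=
    (hu' (σ t)).hasDerivAt.comp t hσd
  have hgd : HasDerivAt (fun s => -2 / n * deriv u (σ s) * a s)
      (-2 / n * (deriv (deriv u) (σ t) * u (σ t) * a t
        + deriv u (σ t) * (-2 / n * deriv u (σ t) * a t))) t := by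
    have h := (hu'd.mul haD).const_mul (-2 / n)
    exact h.congr_of_eventuallyEq (Filter.Eventually.of_forall fun s => by simp only [Pi.mul_apply]; ring)
  have hdd : deriv (deriv a) t
      = -2 / n * (deriv (deriv u) (σ t) * u (σ t) * a t
        + deriv u (σ t) * (-2 / n * deriv u (σ t) * a t)) := by
    rw [hev.deriv_eq]
    exact hgd.deriv
  -- notation
  set W := u (σ t) with hW
  set pu := deriv u (σ t) with hpu
  have hA : a t = W ^ (-2 / n) := by rw [ha]
  have hApos : 0 < a t := by rw [hA]; exact Real.rpow_pos_of_pos hws _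
  have hA0 : a t ≠ 0 := hApos.ne'
  -- rpow identities
  have hA2 : a t ^ 2 = (W ^ (4 / n))⁻¹ := by
    rw [hA, ← Real.rpow_natCast (W ^ (-2 / n)) 2, ← Real.rpow_mul hws.le,
      ← Real.rpow_neg hws.le]
    congr 1
    ring
  have hAn : a t ^ n = (W ^ 2)⁻¹ := by
    rw [hA, ← Real.rpow_mul hws.le]
    have : -2 / n * n = -2 := by field_simp
    rw [this, ← Real.rpow_natCast W 2, ← Real.rpow_neg hws.le]
    norm_num
  have hexp : (4 - n) / n + 1 = 4 / n := by field_simp; ring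
  have hQmul : W ^ ((4 - n) / n) * W = W ^ (4 / n) := by
    calc W ^ ((4 - n) / n) * W = W ^ ((4 - n) / n) * W ^ (1 : ℝ) := by rw [Real.rpow_one]
      _ = W ^ ((4 - n) / n + 1) := (Real.rpow_add hws _ _).symm
      _ = W ^ (4 / n) := by rw [hexp]
  have hQ : W ^ ((4 - n) / n) = W ^ (4 / n) / W := by
    rw [eq_div_iff hws.ne']; exact hQmul
  have hR4 : 0 < W ^ (4 / n) := Real.rpow_pos_of_pos hws _
  -- Schrödinger at σ t
  have hS : deriv (deriv u) (σ t) = -(E - P (σ t)) * W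
      - n * k / 2 * (W ^ (4 / n) / W) := by
    have h := hSchr (σ t)
    rw [hQ] at h
    linarith
  -- psi'
  have hps : deriv ψ (σ t) ^ 2 = 4 / (n * K ^ 2) * P (σ t) := hψ' (σ t)
  constructor
  · simp only [hH, hρ, hv]
    rw [haD.deriv, hφd.deriv, hA2, hAn, mul_pow, hps, hD]
    field_simp
    ring
  · rw [hdd]
    simp only [hρ, hp, hv]
    rw [hφd.deriv, hAn, mul_pow, hps, hD, hS]
    field_simp
    ring
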